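/- Let A_0 = u v' be a nonnegative rank-one d×d matrix and A = A_1 a nonnegative d×d matrix with v'u > 0 and v'Au > 0, and let ω = 01001010⋯ be the Fibonacci sequence (fixed point of 0↦01, 1↦0). Then lim_{n→∞} (1/n) log ‖A_{ω_0} ⋯ A_{ω_{n-1}}‖ = (√5 − 2) log(v'u) + ((3−√5)/2) log(v'Au). Moreover, if v'u = 0 or v'Au = 0, then A_{ω_0}⋯A_{ω_{n-1}} = 0 for all n ≥ 4. -/

import Mathlib

open Filter Topology Matrix

/-- The entry-sum norm `‖A‖ = ∑ᵢⱼ |aᵢⱼ|`. -/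
def entrySumNorm {d : ℕ} (A : Matrix (Fin d) (Fin d) ℝ) : ℝ := ∑ i, ∑ j, |A i j|

/-- The product `A_{ω₀} A_{ω₁} ⋯ A_{ω_{n-1}}` of matrices selected along the sequence `ω`. -/
def prodAlong {d m : ℕ} (A : Fin m → Matrix (Fin d) (Fin d) ℝ) (ω : ℕ → Fin m) (n : ℕ) :
    Matrix (Fin d) (Fin d) ℝ :=
  (List.ofFn fun i : Fin n => A (ω i)).prod

/-- The Fibonacci substitution `0 ↦ 01`, `1 ↦ 0`. -/
def fibSub : Fin 2 → List (Fin 2)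
  | 0 => [0, 1]
  | 1 => [0]

/-- The Fibonacci sequence, the fixed point `ζ^∞(0)` of the Fibonacci substitution. -/
def fibSeq (k : ℕ) : Fin 2 :=
  ((fun l => l.flatMap fibSub)^[k + 2] [0]).getD k 0

namespace LyapFib

def W (k : ℕ) : List (Fin 2) := (fun l => l.flatMap fibSub)^[k] [0]

lemma W_succ (k : ℕ) : W (k+1) = (W k).flatMap fibSub :=
  Function.iterate_succ_apply' _ _ _

lemma W_two (k : ℕ) : W (k+2) = W (k+1) ++ W k := by
  induction k with
  | zero => decide
  | succ k ih =>
      calc W (k+3) = ((W (k+1) ++ W k)).flatMap fibSub := by rw [W_succ (k+2), ih]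
      _ = (W (k+1)).flatMap fibSub ++ (W k).flatMap fibSub := List.flatMap_append
      _ = W (k+2) ++ W (k+1) := by rw [← W_succ, ← W_succ]

lemma W_len (k : ℕ) : (W k).length = Nat.fib (k+2) := by
  induction k using Nat.twoStepInduction with
  | zero => decide
  | one => decide
  | more k ih1 ih2 =>
      rw [W_two, List.length_append, ih1, ih2]
      have e : Nat.fib (k+2+2) = Nat.fib (k+2) + Nat.fib (k+3) := Nat.fib_add_two
      have e2 : Nat.fib (k+1+2) = Nat.fib (k+3) := rfl
      omega

lemma W_prefix {k m : ℕ} (h : k ≤ m) : W k <+: W m := by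
  induction m with
  | zero => rw [Nat.le_zero.mp h]
  | succ m ih =>
      rcases Nat.lt_or_ge k (m+1) with h' | h'
      · refine (ih (by omega)).trans ?_
        cases m with
        | zero => exact ⟨[1], by decide⟩
        | succ m => exact ⟨W m, (W_two m).symm⟩
      · have : k = m + 1 := by omega
        rw [this]

lemma lt_fib (k : ℕ) : k < Nat.fib (k+4) := by
  induction k with
  | zero => decide
  | succ k ih =>
      have h1 : 0 < Nat.fib (k+3) := Nat.fib_pos.mpr (by omega)
      have e : Nat.fib (k+5) = Nat.fib (k+3) + Nat.fib (k+4) := Nat.fib_add_two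
      have e2 : Nat.fib (k+1+4) = Nat.fib (k+5) := rfl
      omega

lemma getD_of_prefix {l l' : List (Fin 2)} (h : l <+: l') {k : ℕ} (hk : k < l.length) :
    l'.getD k 0 = l.getD k 0 := by
  obtain ⟨t, rfl⟩ := h
  exact List.getD_append _ _ _ _ hk

lemma fibSeq_eq_W {m k : ℕ} (hk : k < (W m).length) : fibSeq k = (W m).getD k 0 := by
  have hself : k < (W (k+2)).length := by rw [W_len]; exact lt_fib k
  rcases Nat.le_total m (k+2) with h | h
  · rw [show fibSeq k = (W (k+2)).getD k 0 from rfl, getD_of_prefix (W_prefix h) hk]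
  · rw [show fibSeq k = (W (k+2)).getD k 0 from rfl, getD_of_prefix (W_prefix h) hself]

lemma fibSeq_shift {k j : ℕ} (hj : j < Nat.fib (k+2)) :
    fibSeq (Nat.fib (k+3) + j) = fibSeq j := by
  have h1 : Nat.fib (k+3) + j < (W (k+2)).length := by
    rw [W_len]
    have e : Nat.fib (k+2+2) = Nat.fib (k+2) + Nat.fib (k+3) := Nat.fib_add_two
    omega
  have h2 : j < (W k).length := by rw [W_len]; exact hj
  have hlen : (W (k+1)).length = Nat.fib (k+3) := W_len (k+1)
  rw [fibSeq_eq_W h1, W_two, List.getD_append_right _ _ _ _ (by rw [hlen]; omega),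
    fibSeq_eq_W h2, hlen]
  congr 1
  omega

lemma W_head (k : ℕ) : (W k).getD 0 0 = 0 := by
  have h := getD_of_prefix (W_prefix (Nat.zero_le k)) (l := W 0) (k := 0) (by decide)
  rw [h]; decide

def NoOneOne (l : List (Fin 2)) : Prop := ∀ i, l.getD i 0 = 1 → l.getD (i+1) 0 = 0

lemma noOneOne_append {l1 l2 : List (Fin 2)} (h1 : NoOneOne l1) (h2 : NoOneOne l2)
    (hh : l2.getD 0 0 = 0) : NoOneOne (l1 ++ l2) := by
  intro i hi
  rcases Nat.lt_or_ge i l1.length with h | h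
  · rcases Nat.lt_or_ge (i+1) l1.length with h' | h'
    · rw [List.getD_append _ _ _ _ h'] at *
      rw [List.getD_append _ _ _ _ h] at hi
      exact h1 i hi
    · rw [List.getD_append_right _ _ _ _ h']
      have : i + 1 - l1.length = 0 := by omega
      rw [this, hh]
  · rw [List.getD_append_right _ _ _ _ h] at hi
    rw [List.getD_append_right _ _ _ _ (by omega)]
    have : i + 1 - l1.length = (i - l1.length) + 1 := by omega
    rw [this]
    exact h2 _ hi

lemma noOneOne_W (k : ℕ) : NoOneOne (W k) := by
  induction k using Nat.twoStepInduction with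
  | zero =>
      intro i hi
      match i with
      | 0 => exact absurd hi (by decide)
      | (n+1) =>
          rw [List.getD_eq_default _ _ (by rw [W_len]; norm_num)] at hi
          exact absurd hi (by decide)
  | one =>
      intro i hi
      match i with
      | 0 => exact absurd hi (by decide)
      | 1 => rfl
      | (n+2) =>
          rw [List.getD_eq_default _ _ (by rw [W_len]; norm_num)] at hi
          exact absurd hi (by decide)
  | more k ih1 ih2 =>
      rw [W_two]
      exact noOneOne_append ih2 ih1 (W_head k)

lemma fibSeq_no11 {k : ℕ} (h : fibSeq k = 1) : fibSeq (k+1) = 0 := by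
  have hlen : (W (k+3)).length = Nat.fib (k+5) := W_len (k+3)
  have h1 : k + 1 < Nat.fib (k+5) := by
    have := lt_fib (k+1)
    have e2 : Nat.fib (k+1+4) = Nat.fib (k+5) := rfl
    omega
  have hk : k < (W (k+3)).length := by omega
  have hk1 : k + 1 < (W (k+3)).length := by omega
  rw [fibSeq_eq_W hk1]
  rw [fibSeq_eq_W hk] at h
  exact noOneOne_W (k+3) k h

lemma fibSeq_zero : fibSeq 0 = 0 := by decide

lemma fin2 (x : Fin 2) : x = 0 ∨ x = 1 := by omega

def zc (n : ℕ) : ℕ := ((Finset.range n).filter (fun j => fibSeq j = 0)).card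
def hc (n : ℕ) : ℕ := ((Finset.range n).filter (fun j => fibSeq j = 1)).card
def gc (n : ℕ) : ℕ :=
  ((Finset.range n).filter (fun j => fibSeq j = 0 ∧ fibSeq (j+1) = 0)).card

lemma card_filter_succ (p : ℕ → Prop) [DecidablePred p] (n : ℕ) :
    ((Finset.range (n+1)).filter p).card
      = ((Finset.range n).filter p).card + if p n then 1 else 0 := by
  rw [Finset.range_add_one, Finset.filter_insert]
  split
  · rw [Finset.card_insert_of_notMem (by simp)]
  · simp

lemma zc_succ (n : ℕ) : zc (n+1) = zc n + if fibSeq n = 0 then 1 else 0 :=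
  card_filter_succ _ n
lemma hc_succ (n : ℕ) : hc (n+1) = hc n + if fibSeq n = 1 then 1 else 0 :=
  card_filter_succ _ n
lemma gc_succ (n : ℕ) :
    gc (n+1) = gc n + if fibSeq n = 0 ∧ fibSeq (n+1) = 0 then 1 else 0 :=
  card_filter_succ _ n

lemma zc_add_hc (n : ℕ) : zc n + hc n = n := by
  induction n with
  | zero => rfl
  | succ n ih =>
      rw [zc_succ, hc_succ]
      rcases fin2 (fibSeq n) with h | h <;> simp [h] <;> omega

lemma zc_zc_gc (n : ℕ) : zc n + zc (n+1) = gc n + (n+1) := by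
  induction n with
  | zero => decide
  | succ n ih =>
      have h1 := zc_succ n
      have h2 := zc_succ (n+1)
      have h3 := gc_succ n
      have d01 : (0:Fin 2) ≠ 1 := by decide
      have d10 : (1:Fin 2) ≠ 0 := by decide
      rcases fin2 (fibSeq n) with h | h <;> rcases fin2 (fibSeq (n+1)) with h' | h'
      · simp [h, h', d10, d01] at h1 h2 h3
        omega
      · simp [h, h', d10, d01] at h1 h2 h3
        omega
      · simp [h, h', d10, d01] at h1 h2 h3
        omega
      · exact absurd (fibSeq_no11 h) (by rw [h']; exact d10)

lemma zc_fib_add {k : ℕ} : ∀ j ≤ Nat.fib (k+2),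
    zc (Nat.fib (k+3) + j) = zc (Nat.fib (k+3)) + zc j := by
  intro j
  induction j with
  | zero => intro _; simp [zc]
  | succ j ih =>
      intro hj
      have e : Nat.fib (k+3) + (j+1) = (Nat.fib (k+3) + j) + 1 := by omega
      rw [e, zc_succ, ih (by omega), zc_succ, fibSeq_shift (by omega)]
      omega

lemma zc_fib : ∀ k, zc (Nat.fib (k+3)) = Nat.fib (k+2) := by
  intro k
  induction k using Nat.twoStepInduction with
  | zero => decide
  | one => decide
  | more k ih1 ih2 =>
      have e : Nat.fib (k+2+3) = Nat.fib (k+1+3) + Nat.fib (k+3) := by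
        have h1 : Nat.fib (k+3+2) = Nat.fib (k+3) + Nat.fib (k+4) := Nat.fib_add_two
        have e2 : Nat.fib (k+3+2) = Nat.fib (k+2+3) := rfl
        have e3 : Nat.fib (k+1+3) = Nat.fib (k+4) := rfl
        omega
      have hle : Nat.fib (k+3) ≤ Nat.fib (k+1+2) := le_rfl
      rw [e, zc_fib_add (Nat.fib (k+3)) hle, ih2, ih1]
      have h1 : Nat.fib (k+2+2) = Nat.fib (k+2) + Nat.fib (k+3) := Nat.fib_add_two
      have e3 : Nat.fib (k+1+2) = Nat.fib (k+3) := rfl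
      omega
noncomputable def r : ℝ := (Real.sqrt 5 - 1) / 2

lemma sqrt5_sq : Real.sqrt 5 * Real.sqrt 5 = 5 :=
  Real.mul_self_sqrt (by norm_num)

lemma sqrt5_gt : 2 < Real.sqrt 5 := by
  nlinarith [sqrt5_sq, Real.sqrt_nonneg 5]

lemma sqrt5_lt : Real.sqrt 5 < 3 := by
  nlinarith [sqrt5_sq, Real.sqrt_nonneg 5]

lemma r_pos : 0 < r := by unfold r; linarith [sqrt5_gt]
lemma r_lt_one : r < 1 := by unfold r; linarith [sqrt5_lt]
lemma r_sq : r ^ 2 = 1 - r := by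
  unfold r; field_simp; nlinarith [sqrt5_sq]

lemma fib_r : ∀ m : ℕ, (Nat.fib (m+1) : ℝ) * r = (Nat.fib m : ℝ) - (-r)^(m+1) := by
  intro m
  induction m using Nat.twoStepInduction with
  | zero => simp
  | one =>
      have f1 : ((Nat.fib 1 : ℕ) : ℝ) = 1 := by norm_num
      have f2 : ((Nat.fib (1+1) : ℕ) : ℝ) = 1 := by norm_num
      rw [f1, f2]
      have e : (-r)^(1+1) = r^2 := by ring
      rw [e, r_sq]; ring
  | more m ih1 ih2 =>
      have e1 : Nat.fib (m+3) = Nat.fib (m+1) + Nat.fib (m+2) := Nat.fib_add_two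
      have e2 : Nat.fib (m+2) = Nat.fib m + Nat.fib (m+1) := Nat.fib_add_two
      have hr : r^2 = 1 - r := r_sq
      rw [e1]
      push_cast
      rw [add_mul, ih1, ih2]
      have : (-r)^(m+3) = (-r)^(m+1) * r^2 := by ring
      rw [this, hr, e2]
      push_cast
      ring


lemma zc_zero : zc 0 = 0 := rfl
lemma zc_one : zc 1 = 1 := by decide
lemma gc_zero : gc 0 = 0 := rfl
lemma hc_zero : hc 0 = 0 := rfl

lemma gc_mono : Monotone gc := fun m n h =>
  Finset.card_le_card (Finset.filter_subset_filter _ (Finset.range_subset_range.mpr h))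

lemma hc_mono : Monotone hc := fun m n h =>
  Finset.card_le_card (Finset.filter_subset_filter _ (Finset.range_subset_range.mpr h))

variable {d : ℕ}
lemma r_cube : r ^ 3 = 2 * r - 1 := by
  have h := r_sq
  nlinarith [r_sq]

lemma zc_err : ∀ m n, n < Nat.fib (m+2) → |(zc n : ℝ) - n * r| ≤ 1 - r^m := by
  intro m
  induction m using Nat.strong_induction_on with
  | _ m ih =>
    match m with
    | 0 =>
        intro n hn
        have f2 : Nat.fib (0+2) = 1 := rfl
        have : n = 0 := by omega
        subst this
        simp [zc_zero]
    | 1 =>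
        intro n hn
        have f3 : Nat.fib (1+2) = 2 := rfl
        have hr := r_lt_one
        have hr0 := r_pos
        have hcase : n = 0 ∨ n = 1 := by omega
        rcases hcase with rfl | rfl
        · simp [zc_zero]
          linarith
        · rw [zc_one]
          push_cast
          rw [pow_one, abs_of_nonneg (by linarith : (0:ℝ) ≤ 1 - 1 * r)]
          linarith
    | (m+2) =>
        intro n hn
        have hr := r_lt_one
        have hr0 := r_pos
        have hrm : (0:ℝ) ≤ r^m := le_of_lt (pow_pos hr0 m)
        rcases Nat.lt_or_ge n (Nat.fib (m+3)) with h | h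
        · have := ih (m+1) (by omega) n (by exact h)
          have hmono : r^(m+2) ≤ r^(m+1) :=
            pow_le_pow_of_le_one (le_of_lt hr0) (le_of_lt hr) (by omega)
          linarith
        · set j := n - Nat.fib (m+3) with hj
          have e4 : Nat.fib (m+4) = Nat.fib (m+2) + Nat.fib (m+3) := Nat.fib_add_two
          have e4' : Nat.fib (m+2+2) = Nat.fib (m+4) := rfl
          have hjlt : j < Nat.fib (m+2) := by omega
          have hn' : n = Nat.fib (m+3) + j := by omega
          have hz : zc n = Nat.fib (m+2) + zc j := by
            rw [hn', zc_fib_add j (le_of_lt hjlt), zc_fib]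
          have ihj := ih m (by omega) j hjlt
          have hfr : (Nat.fib (m+3) : ℝ) * r = (Nat.fib (m+2) : ℝ) - (-r)^(m+3) :=
            fib_r (m+2)
          have key : (zc n : ℝ) - n * r = ((zc j : ℝ) - j * r) + (-r)^(m+3) := by
            rw [hz, hn']
            push_cast
            nlinarith [hfr]
          rw [key]
          have habs : |(-r)^(m+3)| = r^(m+3) := by
            rw [abs_pow, abs_neg, abs_of_pos hr0]
          have h3 : r^(m+3) = r^m * r^3 := by ring
          have h2 : r^(m+2) = r^m * r^2 := by ring
          calc |((zc j : ℝ) - j * r) + (-r)^(m+3)|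
              ≤ |(zc j : ℝ) - j * r| + |(-r)^(m+3)| := abs_add_le _ _
            _ ≤ (1 - r^m) + r^(m+3) := by rw [habs]; linarith
            _ ≤ 1 - r^(m+2) := by
                rw [h3, h2, r_sq, r_cube]
                nlinarith
lemma zc_err1 (n : ℕ) : |(zc n : ℝ) - n * r| ≤ 1 := by
  have hlt : n < Nat.fib (n+2+2) := by
    have e : Nat.fib (n+2+2) = Nat.fib (n+4) := rfl
    have := lt_fib n
    omega
  have h := zc_err (n+2) n hlt
  have : (0:ℝ) ≤ r^(n+2) := le_of_lt (pow_pos r_pos _)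
  linarith

lemma lim_of_bdd (x : ℕ → ℝ) (c C : ℝ) (h : ∀ n, |x n - (n+1)*c| ≤ C) :
    Tendsto (fun n : ℕ => x n / (n+1)) atTop (𝓝 c) := by
  have h1 : Tendsto (fun n : ℕ => C * (1/((n:ℝ)+1))) atTop (𝓝 (C * 0)) :=
    tendsto_const_nhds.mul tendsto_one_div_add_atTop_nhds_zero_nat
  rw [mul_zero] at h1
  have h0 : Tendsto (fun n : ℕ => x n / ((n:ℝ)+1) - c) atTop (𝓝 0) := by
    apply squeeze_zero_norm _ h1
    intro n
    have hpos : (0:ℝ) < (n:ℝ) + 1 := by positivity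
    rw [Real.norm_eq_abs]
    have : x n / ((n:ℝ)+1) - c = (x n - ((n:ℝ)+1)*c) / ((n:ℝ)+1) := by
      field_simp
    rw [this, abs_div, abs_of_pos hpos]
    rw [div_le_iff₀ hpos] at *
    calc |x n - ((n:ℝ)+1)*c| ≤ C := h n
      _ ≤ C * (1/((n:ℝ)+1)) * ((n:ℝ)+1) := by
          field_simp
          exact le_rfl
  have := h0.add (tendsto_const_nhds (x := c) (f := atTop (α := ℕ)))
  rw [zero_add] at this
  convert this using 2 with n
  ring

lemma vmv_mul (u v u' v' : Fin d → ℝ) :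
    vecMulVec u v * vecMulVec u' v' = (v ⬝ᵥ u') • vecMulVec u v' := by
  ext i j
  simp only [mul_apply, vecMulVec_apply, Matrix.smul_apply, smul_eq_mul, dotProduct]
  rw [Finset.sum_mul]
  exact Finset.sum_congr rfl (fun k _ => by ring)

lemma vmv_mul_mat (u v : Fin d → ℝ) (M : Matrix (Fin d) (Fin d) ℝ) :
    vecMulVec u v * M = vecMulVec u (M.vecMul v) := by
  ext i j
  simp only [mul_apply, vecMulVec_apply, vecMul, dotProduct, Finset.mul_sum]
  exact Finset.sum_congr rfl (fun k _ => by ring)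

lemma esn_smul (c : ℝ) (hc : 0 ≤ c) (M : Matrix (Fin d) (Fin d) ℝ) :
    entrySumNorm (c • M) = c * entrySumNorm M := by
  simp only [entrySumNorm, Matrix.smul_apply, smul_eq_mul, abs_mul, abs_of_nonneg hc,
    Finset.mul_sum]

lemma esn_pos (M : Matrix (Fin d) (Fin d) ℝ) (hM : ∀ i j, 0 ≤ M i j)
    {i0 j0 : Fin d} (h : 0 < M i0 j0) : 0 < entrySumNorm M := by
  unfold entrySumNorm
  have h1 : |M i0 j0| ≤ ∑ j, |M i0 j| :=
    Finset.single_le_sum (f := fun j => |M i0 j|) (fun j _ => abs_nonneg _)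
      (Finset.mem_univ j0)
  have h2 : ∑ j, |M i0 j| ≤ ∑ i, ∑ j, |M i j| :=
    Finset.single_le_sum (f := fun i => ∑ j, |M i j|)
      (fun i _ => Finset.sum_nonneg fun j _ => abs_nonneg _) (Finset.mem_univ i0)
  have := abs_of_pos h
  linarith [abs_of_pos h]

lemma exists_pos_of_dot (w u : Fin d → ℝ) (hw : ∀ i, 0 ≤ w i) (hu : ∀ i, 0 ≤ u i)
    (h : 0 < w ⬝ᵥ u) : ∃ i, 0 < w i ∧ 0 < u i := by
  unfold dotProduct at h
  have : ∃ i ∈ Finset.univ, (0:ℝ) < w i * u i := by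
    by_contra hc
    push_neg at hc
    have : ∑ i, w i * u i ≤ 0 := Finset.sum_nonpos fun i hi => hc i hi
    linarith
  obtain ⟨i, _, hi⟩ := this
  refine ⟨i, ?_, ?_⟩
  · rcases lt_or_eq_of_le (hw i) with h' | h'
    · exact h'
    · rw [← h'] at hi; simp at hi
  · rcases lt_or_eq_of_le (hu i) with h' | h'
    · exact h'
    · rw [← h'] at hi; simp at hi

lemma prodAlong_succ (A : Fin 2 → Matrix (Fin d) (Fin d) ℝ) (ω : ℕ → Fin 2) (n : ℕ) :
    prodAlong A ω (n+1) = prodAlong A ω n * A (ω n) := by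
  unfold prodAlong
  rw [List.ofFn_succ', List.prod_concat]
  rfl

lemma prod_formula (u v : Fin d → ℝ) (A : Fin 2 → Matrix (Fin d) (Fin d) ℝ)
    (hA0 : A 0 = vecMulVec u v) (n : ℕ) :
    prodAlong A fibSeq (n+1)
      = ((v ⬝ᵥ u)^(gc n) * ((A 1).vecMul v ⬝ᵥ u)^(hc n)) •
        (if fibSeq n = 0 then vecMulVec u v else vecMulVec u v * A 1) := by
  induction n with
  | zero =>
      rw [if_pos fibSeq_zero, gc_zero, hc_zero, pow_zero, pow_zero, mul_one, one_smul]
      unfold prodAlong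
      simp only [List.ofFn_succ, List.ofFn_zero, List.prod_cons, List.prod_nil, mul_one]
      rw [show ((0 : Fin 1) : ℕ) = 0 from rfl, fibSeq_zero, hA0]
  | succ n ih =>
      rw [prodAlong_succ, ih]
      rcases fin2 (fibSeq n) with h | h <;> rcases fin2 (fibSeq (n+1)) with h' | h'
      · rw [if_pos h, if_pos h', gc_succ, hc_succ, if_pos ⟨h, h'⟩, if_neg (by rw [h]; decide),
          Matrix.smul_mul, h', hA0, vmv_mul]
        rw [smul_smul]
        congr 1
        ring
      · rw [if_pos h, if_neg (by rw [h']; decide), gc_succ, hc_succ,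
          if_neg (by rw [h']; simp), if_neg (by rw [h]; decide), Matrix.smul_mul, h']
        rw [add_zero, add_zero]
      · rw [if_neg (by rw [h]; decide), if_pos h', gc_succ, hc_succ,
          if_neg (by rw [h]; simp), if_pos h, Matrix.smul_mul, h', hA0]
        rw [vmv_mul_mat, vmv_mul, smul_smul]
        congr 1
        ring
      · exact absurd (fibSeq_no11 h) (by rw [h']; decide)


end LyapFib

open LyapFib

/-- For `A₀ = u vᵀ` a nonnegative rank-one matrix and `A₁` nonnegative, with matrices selected
along the Fibonacci sequence: if `vᵀu > 0` and `vᵀA₁u > 0` then the Lyapunov exponent exists and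
equals `(√5 - 2) log(vᵀu) + ((3-√5)/2) log(vᵀA₁u)`; moreover if `vᵀu = 0` or `vᵀA₁u = 0` then
the product vanishes from `n = 4` on. -/
theorem lyapunov_fibonacci {d : ℕ} (u v : Fin d → ℝ)
    (hu : ∀ i, 0 ≤ u i) (hv : ∀ i, 0 ≤ v i)
    (A : Fin 2 → Matrix (Fin d) (Fin d) ℝ)
    (hA0 : A 0 = vecMulVec u v) (hA1 : ∀ i j, 0 ≤ A 1 i j) :
    ((0 < v ⬝ᵥ u ∧ 0 < v ⬝ᵥ (A 1).mulVec u) →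
      Tendsto (fun n => Real.log (entrySumNorm (prodAlong A fibSeq n)) / n) atTop
        (𝓝 ((Real.sqrt 5 - 2) * Real.log (v ⬝ᵥ u) +
          ((3 - Real.sqrt 5) / 2) * Real.log (v ⬝ᵥ (A 1).mulVec u)))) ∧
    ((v ⬝ᵥ u = 0 ∨ v ⬝ᵥ (A 1).mulVec u = 0) →
      ∀ n, 4 ≤ n → prodAlong A fibSeq n = 0) := by
  have hbb : v ⬝ᵥ (A 1).mulVec u = (A 1).vecMul v ⬝ᵥ u := Matrix.dotProduct_mulVec v (A 1) u
  constructor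
  · rintro ⟨hapos, hbpos0⟩
    have hbpos : 0 < (A 1).vecMul v ⬝ᵥ u := hbb ▸ hbpos0
    obtain ⟨i0, hvi, hui⟩ := exists_pos_of_dot v u hv hu hapos
    have hK0 : 0 < entrySumNorm (vecMulVec u v) :=
      esn_pos _ (fun i j => mul_nonneg (hu i) (hv j)) (i0 := i0) (j0 := i0)
        (show 0 < vecMulVec u v i0 i0 by
          rw [Matrix.vecMulVec_apply]; exact mul_pos hui hvi)
    have hw : ∀ j, 0 ≤ (A 1).vecMul v j := by
      intro j
      rw [Matrix.vecMul, dotProduct]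
      exact Finset.sum_nonneg fun k _ => mul_nonneg (hv k) (hA1 k j)
    obtain ⟨j0, hwj, huj⟩ := exists_pos_of_dot _ u hw hu hbpos
    have hK1eq : vecMulVec u v * A 1 = vecMulVec u ((A 1).vecMul v) := vmv_mul_mat u v (A 1)
    have hK1 : 0 < entrySumNorm (vecMulVec u v * A 1) := by
      rw [hK1eq]
      exact esn_pos _ (fun i j => mul_nonneg (hu i) (hw j)) (i0 := j0) (j0 := j0)
        (show 0 < vecMulVec u ((A 1).vecMul v) j0 j0 by
          rw [Matrix.vecMulVec_apply]; exact mul_pos huj hwj)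
    have hr0 := r_pos
    have hr1 := r_lt_one
    have hgcb : ∀ n : ℕ, |(gc n : ℝ) - ((n:ℝ)+1)*(2*r-1)| ≤ 3 := by
      intro n
      have h1 := zc_err1 n
      have h2 := zc_err1 (n+1)
      have e : (gc n : ℝ) + ((n:ℝ)+1) = (zc n : ℝ) + (zc (n+1) : ℝ) := by
        exact_mod_cast (zc_zc_gc n).symm
      rw [abs_le] at h1 h2 ⊢
      push_cast at h1 h2 e ⊢
      constructor <;> nlinarith [h1.1, h1.2, h2.1, h2.2]
    have hhcb : ∀ n : ℕ, |(hc n : ℝ) - ((n:ℝ)+1)*(1-r)| ≤ 2 := by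
      intro n
      have h1 := zc_err1 n
      have e : (zc n : ℝ) + (hc n : ℝ) = (n : ℝ) := by exact_mod_cast zc_add_hc n
      rw [abs_le] at h1 ⊢
      constructor <;> nlinarith [h1.1, h1.2]
    set a := v ⬝ᵥ u with ha_def
    set b := (A 1).vecMul v ⬝ᵥ u with hb_def
    set K0 := entrySumNorm (vecMulVec u v) with hK0_def
    set K1 := entrySumNorm (vecMulVec u v * A 1) with hK1_def
    set La := Real.log a with hLa
    set Lb := Real.log b with hLb
    set L := (2*r-1) * La + (1-r) * Lb with hL
    set C := 3*|La| + 2*|Lb| + (|Real.log K0| + |Real.log K1|) with hC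
    have hx : ∀ n : ℕ, Real.log (entrySumNorm (prodAlong A fibSeq (n+1)))
        = (gc n : ℝ) * La + (hc n : ℝ) * Lb
          + Real.log (if fibSeq n = 0 then K0 else K1) := by
      intro n
      rw [prod_formula u v A hA0 n]
      have hcoef : (0:ℝ) ≤ a ^ gc n * b ^ hc n := by positivity
      rw [esn_smul _ hcoef, apply_ite entrySumNorm]
      have hifpos : (0:ℝ) < if fibSeq n = 0 then K0 else K1 := by
        split_ifs <;> assumption
      rw [Real.log_mul (by positivity) (ne_of_gt hifpos),
        Real.log_mul (by positivity) (by positivity), Real.log_pow, Real.log_pow]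
    have hbd : ∀ n : ℕ, |(gc n : ℝ) * La + (hc n : ℝ) * Lb
        + Real.log (if fibSeq n = 0 then K0 else K1) - ((n:ℝ)+1) * L| ≤ C := by
      intro n
      have h1 := hgcb n
      have h2 := hhcb n
      have h3 : |Real.log (if fibSeq n = 0 then K0 else K1)|
          ≤ |Real.log K0| + |Real.log K1| := by
        split_ifs
        · linarith [abs_nonneg (Real.log K1)]
        · linarith [abs_nonneg (Real.log K0)]
      have key : (gc n : ℝ) * La + (hc n : ℝ) * Lb
          + Real.log (if fibSeq n = 0 then K0 else K1) - ((n:ℝ)+1) * L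
          = ((gc n : ℝ) - ((n:ℝ)+1)*(2*r-1)) * La + (((hc n : ℝ) - ((n:ℝ)+1)*(1-r)) * Lb
            + Real.log (if fibSeq n = 0 then K0 else K1)) := by
        rw [hL]; ring
      rw [key, hC]
      have b1 : |((gc n : ℝ) - ((n:ℝ)+1)*(2*r-1)) * La| ≤ 3 * |La| := by
        rw [abs_mul]
        exact mul_le_mul_of_nonneg_right h1 (abs_nonneg _)
      have b2 : |((hc n : ℝ) - ((n:ℝ)+1)*(1-r)) * Lb| ≤ 2 * |Lb| := by
        rw [abs_mul]
        exact mul_le_mul_of_nonneg_right h2 (abs_nonneg _)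
      calc |((gc n : ℝ) - ((n:ℝ)+1)*(2*r-1)) * La + (((hc n : ℝ) - ((n:ℝ)+1)*(1-r)) * Lb
            + Real.log (if fibSeq n = 0 then K0 else K1))|
          ≤ |((gc n : ℝ) - ((n:ℝ)+1)*(2*r-1)) * La| + |((hc n : ℝ) - ((n:ℝ)+1)*(1-r)) * Lb
            + Real.log (if fibSeq n = 0 then K0 else K1)| := abs_add_le _ _
        _ ≤ |((gc n : ℝ) - ((n:ℝ)+1)*(2*r-1)) * La| + (|((hc n : ℝ) - ((n:ℝ)+1)*(1-r)) * Lb|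
            + |Real.log (if fibSeq n = 0 then K0 else K1)|) := by
              linarith [abs_add_le (((hc n : ℝ) - ((n:ℝ)+1)*(1-r)) * Lb)
                (Real.log (if fibSeq n = 0 then K0 else K1))]
        _ ≤ 3*|La| + (2*|Lb| + (|Real.log K0| + |Real.log K1|)) := by linarith
        _ = 3*|La| + 2*|Lb| + (|Real.log K0| + |Real.log K1|) := by ring
    have main := lim_of_bdd _ L C hbd
    have hLeq : L = (Real.sqrt 5 - 2) * Real.log a + ((3 - Real.sqrt 5)/2) * Real.log b := by
      rw [hL, hLa, hLb]
      unfold r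
      ring
    rw [hbb, ← hLeq]
    rw [← tendsto_add_atTop_iff_nat 1]
    apply main.congr
    intro n
    rw [hx n]
    push_cast
    ring
  · rintro (h0 | h0) n hn
    obtain ⟨m, rfl⟩ : ∃ m, n = m + 1 := ⟨n-1, by omega⟩
    · rw [prod_formula u v A hA0 m]
      have hg : gc m ≠ 0 := by
        have h3 : 1 ≤ gc 3 := by decide
        have := gc_mono (show 3 ≤ m by omega)
        omega
      rw [h0, zero_pow hg, zero_mul, zero_smul]
    obtain ⟨m, rfl⟩ : ∃ m, n = m + 1 := ⟨n-1, by omega⟩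
    · rw [prod_formula u v A hA0 m]
      have hg : hc m ≠ 0 := by
        have h3 : 1 ≤ hc 3 := by decide
        have := hc_mono (show 3 ≤ m by omega)
        omega
      rw [hbb] at h0
      rw [h0, zero_pow hg, mul_zero, zero_smul]
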